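/- Fix β₀ ∈ ℝ, σ > 0 and p ∈ (0,1). Consider two models of (log Y, X) with X ∈ {0,1} Bernoulli(p). Model A: ε ≡ β₀ is constant, and conditionally on X = 0 the intercept a is N(0,1) while conditionally on X = 1 it is N(0, 1+σ²), with log Y = a + ε·X. Model B: (a, ε) are independent of X and of each other, a ~ N(0,1), ε ~ N(β₀, σ²), and log Y = a + ε·X. Then the joint distribution of (log Y, X) is the same in both models — conditionally on X = 0 it is N(0,1) and conditionally on X = 1 it is N(β₀, 1+σ²) — yet the arithmetic mean semi-elasticities differ: θ_A(x) := E_A[ε·e^{a+εx}]/E_A[e^{a+εx}] = β₀ for all x, while θ_B(x) = β₀ + σ²·x, so θ_A(x) ≠ θ_B(x) for every x ≠ 0. -/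

import Mathlib

open MeasureTheory Real ProbabilityTheory

open scoped NNReal ENNReal

section helpers

lemma pdf_tilt (m t : ℝ) (v : ℝ≥0) (hv : v ≠ 0) (y : ℝ) :
    Real.exp (t * y) * gaussianPDFReal m v y
      = Real.exp (t * m + v * t ^ 2 / 2) * gaussianPDFReal (m + v * t) v y := by
  have hv' : (0:ℝ) < v := lt_of_le_of_ne v.coe_nonneg (by exact_mod_cast hv.symm)
  unfold gaussianPDFReal
  rw [mul_comm (Real.exp (t*y)), mul_assoc, mul_left_comm (Real.exp (t*m + v*t^2/2)),
    ← Real.exp_add, ← Real.exp_add]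
  congr 2
  field_simp
  ring

lemma nnreal_pos_of_ne_zero {v : ℝ≥0} (hv : v ≠ 0) : (0:ℝ) < v :=
  lt_of_le_of_ne v.coe_nonneg (by exact_mod_cast hv.symm)

lemma pdf_mul_pdf (m1 m2 : ℝ) (v1 v2 : ℝ≥0) (h1 : v1 ≠ 0) (h2 : v2 ≠ 0) (z x : ℝ) :
    gaussianPDFReal m1 v1 x * gaussianPDFReal m2 v2 (z - x)
      = gaussianPDFReal (m1 + m2) (v1 + v2) z
        * gaussianPDFReal (m1 + v1 * (z - m1 - m2) / (v1 + v2)) (v1 * v2 / (v1 + v2)) x := by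
  have ha : (0:ℝ) < v1 := nnreal_pos_of_ne_zero h1
  have hb : (0:ℝ) < v2 := nnreal_pos_of_ne_zero h2
  have hab : (0:ℝ) < (v1:ℝ) + v2 := by linarith
  unfold gaussianPDFReal
  push_cast
  rw [mul_mul_mul_comm]
  conv_rhs => rw [mul_mul_mul_comm]
  rw [← Real.exp_add, ← Real.exp_add]
  congr 1
  · rw [← mul_inv, ← mul_inv, ← Real.sqrt_mul (by positivity), ← Real.sqrt_mul (by positivity)]
    congr 2
    field_simp
  · congr 1
    field_simp
    ring

lemma integrable_id_mul_pdf0 (v : ℝ≥0) (hv : v ≠ 0) :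
    Integrable (fun z => z * gaussianPDFReal 0 v z) := by
  have hv' : (0:ℝ) < v := nnreal_pos_of_ne_zero hv
  have hb : (0:ℝ) < (2*(v:ℝ))⁻¹ := by positivity
  have h := (integrable_mul_exp_neg_mul_sq hb).const_mul ((Real.sqrt (2*π*v))⁻¹)
  refine h.congr (Filter.Eventually.of_forall fun z => ?_)
  simp only [gaussianPDFReal, sub_zero]
  rw [neg_div, div_eq_inv_mul, ← neg_mul]
  ring

lemma integrable_id_mul_pdf (m : ℝ) (v : ℝ≥0) (hv : v ≠ 0) :
    Integrable (fun y => y * gaussianPDFReal m v y) := by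
  have h0 := integrable_id_mul_pdf0 v hv
  have h1 : Integrable (fun z => z * gaussianPDFReal 0 v z + m * gaussianPDFReal 0 v z) :=
    h0.add ((integrable_gaussianPDFReal 0 v).const_mul m)
  have h2 := h1.comp_sub_right m
  refine h2.congr (Filter.Eventually.of_forall fun y => ?_)
  show (y - m) * gaussianPDFReal 0 v (y - m) + m * gaussianPDFReal 0 v (y - m)
      = y * gaussianPDFReal m v y
  have : gaussianPDFReal 0 v (y - m) = gaussianPDFReal m v y := by
    rw [gaussianPDFReal_sub, zero_add]
  rw [this]; ring

lemma integral_id_mul_pdf0 (v : ℝ≥0) (hv : v ≠ 0) :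
    ∫ z, z * gaussianPDFReal 0 v z = 0 := by
  have hodd : ∀ z : ℝ, (-z) * gaussianPDFReal 0 v (-z) = -(z * gaussianPDFReal 0 v z) := by
    intro z
    have : gaussianPDFReal 0 v (-z) = gaussianPDFReal 0 v z := by
      simp [gaussianPDFReal, neg_sq]
    rw [this]; ring
  have h := integral_neg_eq_self (fun z => z * gaussianPDFReal 0 v z) volume
  simp only [hodd] at h
  rw [integral_neg] at h
  linarith

lemma integral_id_mul_pdf (m : ℝ) (v : ℝ≥0) (hv : v ≠ 0) :
    ∫ y, y * gaussianPDFReal m v y = m := by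
  have hshift := integral_add_right_eq_self (μ := volume) (fun y => y * gaussianPDFReal m v y) m
  rw [← hshift]
  have : ∀ z : ℝ, (z + m) * gaussianPDFReal m v (z + m)
      = z * gaussianPDFReal 0 v z + m * gaussianPDFReal 0 v z := by
    intro z
    rw [gaussianPDFReal_add, sub_self]
    ring
  simp only [this]
  rw [integral_add (integrable_id_mul_pdf0 v hv)
    ((integrable_gaussianPDFReal 0 v).const_mul m),
    integral_id_mul_pdf0 v hv, MeasureTheory.integral_const_mul, integral_gaussianPDFReal_eq_one 0 hv]
  ring

lemma gaussianReal_integral_eq (m : ℝ) {v : ℝ≥0} (hv : v ≠ 0) (g : ℝ → ℝ) :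
    ∫ y, g y ∂(gaussianReal m v) = ∫ y, gaussianPDFReal m v y * g y := by
  rw [gaussianReal_of_var_ne_zero _ hv]
  have hd : gaussianPDF m v
      = fun x => ((Real.toNNReal (gaussianPDFReal m v x) : ℝ≥0) : ℝ≥0∞) := rfl
  rw [hd, integral_withDensity_eq_integral_smul
    ((measurable_gaussianPDFReal m v).real_toNNReal) g]
  congr 1; funext x
  simp [NNReal.smul_def, Real.coe_toNNReal _ (gaussianPDFReal_nonneg m v x)]

lemma gaussianReal_integrable_iff (m : ℝ) {v : ℝ≥0} (hv : v ≠ 0) (g : ℝ → ℝ) :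
    Integrable g (gaussianReal m v)
      ↔ Integrable (fun y => gaussianPDFReal m v y * g y) volume := by
  rw [gaussianReal_of_var_ne_zero _ hv]
  have hd : gaussianPDF m v
      = fun x => ((Real.toNNReal (gaussianPDFReal m v x) : ℝ≥0) : ℝ≥0∞) := rfl
  rw [hd, integrable_withDensity_iff_integrable_smul
    ((measurable_gaussianPDFReal m v).real_toNNReal)]
  constructor <;> intro h <;> refine h.congr (Filter.Eventually.of_forall fun x => ?_) <;>
    simp [NNReal.smul_def, Real.coe_toNNReal _ (gaussianPDFReal_nonneg m v x)]

lemma integrable_exp_gaussianReal (m t : ℝ) {v : ℝ≥0} (hv : v ≠ 0) :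
    Integrable (fun y => Real.exp (t * y)) (gaussianReal m v) := by
  rw [gaussianReal_integrable_iff m hv]
  have : ∀ y : ℝ, gaussianPDFReal m v y * Real.exp (t * y)
      = Real.exp (t * m + v * t ^ 2 / 2) * gaussianPDFReal (m + v * t) v y := by
    intro y; rw [mul_comm]; exact pdf_tilt m t v hv y
  simp only [this]
  exact (integrable_gaussianPDFReal _ _).const_mul _

lemma integral_exp_gaussianReal (m t : ℝ) {v : ℝ≥0} (hv : v ≠ 0) :
    ∫ y, Real.exp (t * y) ∂(gaussianReal m v) = Real.exp (t * m + v * t ^ 2 / 2) := by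
  rw [gaussianReal_integral_eq m hv]
  have : ∀ y : ℝ, gaussianPDFReal m v y * Real.exp (t * y)
      = Real.exp (t * m + v * t ^ 2 / 2) * gaussianPDFReal (m + v * t) v y := by
    intro y; rw [mul_comm]; exact pdf_tilt m t v hv y
  simp only [this]
  rw [MeasureTheory.integral_const_mul, integral_gaussianPDFReal_eq_one _ hv, mul_one]

lemma integrable_id_mul_exp_gaussianReal (m t : ℝ) {v : ℝ≥0} (hv : v ≠ 0) :
    Integrable (fun y => y * Real.exp (t * y)) (gaussianReal m v) := by
  rw [gaussianReal_integrable_iff m hv]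
  have : ∀ y : ℝ, gaussianPDFReal m v y * (y * Real.exp (t * y))
      = Real.exp (t * m + v * t ^ 2 / 2) * (y * gaussianPDFReal (m + v * t) v y) := by
    intro y
    have := pdf_tilt m t v hv y
    calc gaussianPDFReal m v y * (y * Real.exp (t * y))
        = y * (Real.exp (t * y) * gaussianPDFReal m v y) := by ring
      _ = y * (Real.exp (t * m + v * t ^ 2 / 2) * gaussianPDFReal (m + v * t) v y) := by rw [this]
      _ = _ := by ring
  simp only [this]
  exact (integrable_id_mul_pdf (m + v * t) v hv).const_mul _

lemma integral_id_mul_exp_gaussianReal (m t : ℝ) {v : ℝ≥0} (hv : v ≠ 0) :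
    ∫ y, y * Real.exp (t * y) ∂(gaussianReal m v)
      = (m + v * t) * Real.exp (t * m + v * t ^ 2 / 2) := by
  rw [gaussianReal_integral_eq m hv]
  have : ∀ y : ℝ, gaussianPDFReal m v y * (y * Real.exp (t * y))
      = Real.exp (t * m + v * t ^ 2 / 2) * (y * gaussianPDFReal (m + v * t) v y) := by
    intro y
    have := pdf_tilt m t v hv y
    calc gaussianPDFReal m v y * (y * Real.exp (t * y))
        = y * (Real.exp (t * y) * gaussianPDFReal m v y) := by ring
      _ = y * (Real.exp (t * m + v * t ^ 2 / 2) * gaussianPDFReal (m + v * t) v y) := by rw [this]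
      _ = _ := by ring
  simp only [this]
  rw [MeasureTheory.integral_const_mul, integral_id_mul_pdf (m + v * t) v hv]
  ring

lemma lint_conv (m1 m2 : ℝ) {v1 v2 : ℝ≥0} (h1 : v1 ≠ 0) (h2 : v2 ≠ 0) (z : ℝ) :
    ∫⁻ x, ENNReal.ofReal (gaussianPDFReal m1 v1 x)
        * ENNReal.ofReal (gaussianPDFReal m2 v2 (z - x))
      = ENNReal.ofReal (gaussianPDFReal (m1 + m2) (v1 + v2) z) := by
  have h12 : v1 + v2 ≠ 0 := by
    intro h; exact h1 (by simpa using (add_eq_zero.mp h).1)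
  have hd : v1 * v2 / (v1 + v2) ≠ 0 := by
    simp [div_eq_zero_iff, mul_eq_zero, h1, h2, h12]
  simp_rw [← ENNReal.ofReal_mul (gaussianPDFReal_nonneg m1 v1 _),
    pdf_mul_pdf m1 m2 v1 v2 h1 h2 z,
    ENNReal.ofReal_mul (gaussianPDFReal_nonneg (m1+m2) (v1+v2) z)]
  rw [lintegral_const_mul _ ((measurable_gaussianPDFReal _ _).ennreal_ofReal),
    lintegral_gaussianPDFReal_eq_one _ hd, mul_one]

lemma gaussianReal_conv (m1 m2 : ℝ) {v1 v2 : ℝ≥0} (h1 : v1 ≠ 0) (h2 : v2 ≠ 0) :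
    Measure.map (fun p : ℝ × ℝ => p.1 + p.2)
        ((gaussianReal m1 v1).prod (gaussianReal m2 v2))
      = gaussianReal (m1 + m2) (v1 + v2) := by
  have h12 : v1 + v2 ≠ 0 := by
    intro h; exact h1 (by simpa using (add_eq_zero.mp h).1)
  ext s hs
  rw [Measure.map_apply (show Measurable (fun p : ℝ × ℝ => p.1 + p.2) by fun_prop) hs,
    Measure.prod_apply ((show Measurable (fun p : ℝ × ℝ => p.1 + p.2) by fun_prop) hs)]
  have hsec : ∀ x : ℝ,
      (gaussianReal m2 v2) (Prod.mk x ⁻¹' ((fun p : ℝ × ℝ => p.1 + p.2) ⁻¹' s))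
        = ∫⁻ z, ENNReal.ofReal (gaussianPDFReal m2 v2 (z - x)) * s.indicator 1 z := by
    intro x
    have hpre : (Prod.mk x ⁻¹' ((fun p : ℝ × ℝ => p.1 + p.2) ⁻¹' s))
        = (fun y => x + y) ⁻¹' s := rfl
    have hmap : (gaussianReal m2 v2) ((fun y => x + y) ⁻¹' s)
        = (Measure.map (fun y => x + y) (gaussianReal m2 v2)) s :=
      (Measure.map_apply (measurable_id'.const_add x) hs).symm
    rw [hpre, hmap, gaussianReal_map_const_add, gaussianReal_apply _ h2,
      ← lintegral_indicator hs]
    congr 1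
    funext z
    rcases Classical.em (z ∈ s) with h | h
    · simp only [Set.indicator_of_mem h, Pi.one_apply, mul_one, gaussianPDF]
      rw [← gaussianPDFReal_sub]
    · simp [Set.indicator_of_notMem h]
  simp_rw [hsec]
  rw [gaussianReal_of_var_ne_zero _ h1,
    lintegral_withDensity_eq_lintegral_mul _ (measurable_gaussianPDF m1 v1) ?_]
  rotate_left
  · apply Measurable.lintegral_prod_right'
      (f := fun q : ℝ × ℝ => ENNReal.ofReal (gaussianPDFReal m2 v2 (q.2 - q.1))
        * s.indicator 1 q.2)
    exact (((measurable_gaussianPDFReal m2 v2).comp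
      (measurable_snd.sub measurable_fst)).ennreal_ofReal).mul
      ((measurable_const.indicator hs).comp measurable_snd)
  have hswap : ∫⁻ x, (gaussianPDF m1 v1 *
        fun x => ∫⁻ z, ENNReal.ofReal (gaussianPDFReal m2 v2 (z - x)) * s.indicator 1 z) x
      = ∫⁻ z, (∫⁻ x, gaussianPDF m1 v1 x
          * (ENNReal.ofReal (gaussianPDFReal m2 v2 (z - x)) * s.indicator 1 z)) := by
    rw [← lintegral_lintegral_swap]
    · congr 1
      funext x
      simp only [Pi.mul_apply]
      exact (lintegral_const_mul _
        ((((measurable_gaussianPDFReal m2 v2).comp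
          (measurable_id.sub_const x)).ennreal_ofReal).mul
          (measurable_const.indicator hs))).symm
    · apply Measurable.aemeasurable
      exact ((measurable_gaussianPDF m1 v1).comp measurable_fst).mul
        ((((measurable_gaussianPDFReal m2 v2).comp
          (measurable_snd.sub measurable_fst)).ennreal_ofReal).mul
          ((measurable_const.indicator hs).comp measurable_snd))
  rw [hswap]
  have hinner : ∀ z : ℝ, (∫⁻ x, gaussianPDF m1 v1 x
        * (ENNReal.ofReal (gaussianPDFReal m2 v2 (z - x)) * s.indicator 1 z))
      = ENNReal.ofReal (gaussianPDFReal (m1 + m2) (v1 + v2) z) * s.indicator 1 z := by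
    intro z
    have hm : Measurable fun x : ℝ => gaussianPDF m1 v1 x
        * ENNReal.ofReal (gaussianPDFReal m2 v2 (z - x)) :=
      (measurable_gaussianPDF m1 v1).mul
        (((measurable_gaussianPDFReal m2 v2).comp (measurable_id.const_sub z)).ennreal_ofReal)
    calc ∫⁻ x, gaussianPDF m1 v1 x
          * (ENNReal.ofReal (gaussianPDFReal m2 v2 (z - x)) * s.indicator 1 z)
        = ∫⁻ x, (gaussianPDF m1 v1 x * ENNReal.ofReal (gaussianPDFReal m2 v2 (z - x)))
            * s.indicator 1 z := by simp_rw [mul_assoc]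
      _ = (∫⁻ x, gaussianPDF m1 v1 x * ENNReal.ofReal (gaussianPDFReal m2 v2 (z - x)))
            * s.indicator 1 z := lintegral_mul_const _ hm
      _ = ENNReal.ofReal (gaussianPDFReal (m1 + m2) (v1 + v2) z) * s.indicator 1 z := by
          congr 1
          rw [← lint_conv m1 m2 h1 h2 z]
          simp [gaussianPDF]
  simp_rw [hinner]
  rw [gaussianReal_apply _ h12, ← lintegral_indicator hs]
  congr 1
  funext z
  rcases Classical.em (z ∈ s) with h | h
  · simp [Set.indicator_of_mem h, gaussianPDF]
  · simp [Set.indicator_of_notMem h]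

section glue
variable {Ω : Type*} [MeasurableSpace Ω] {μ : Measure Ω} [IsProbabilityMeasure μ]

lemma map_cond_of_indepFun {β γ : Type*} [MeasurableSpace β] [MeasurableSpace γ]
    {Z : Ω → β} {X : Ω → γ} (hZ : Measurable Z) (hX : Measurable X)
    (hind : IndepFun Z X μ) {t : Set γ} (ht : MeasurableSet t) (h0 : μ (X ⁻¹' t) ≠ 0) :
    Measure.map Z (μ[|X ⁻¹' t]) = Measure.map Z μ := by
  ext s hs
  rw [Measure.map_apply hZ hs, Measure.map_apply hZ hs, cond_apply (hX ht)]
  have h := hind.measure_inter_preimage_eq_mul _ _ hs ht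
  rw [Set.inter_comm, h, ← mul_assoc, mul_comm, ← mul_assoc,
    ENNReal.mul_inv_cancel h0 (measure_ne_top μ _), one_mul]

lemma restrict_eq_smul_cond {s : Set Ω} (h0 : μ s ≠ 0) :
    μ.restrict s = μ s • μ[|s] := by
  rw [ProbabilityTheory.cond, smul_smul, ENNReal.mul_inv_cancel h0 (measure_ne_top μ _), one_smul]

lemma map_pair_eq (L X : Ω → ℝ) (hL : Measurable L) (hX : Measurable X)
    (hbin : ∀ ω, X ω = 0 ∨ X ω = 1) {q : ℝ≥0∞} (hq : μ (X ⁻¹' {1}) = q)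
    (hq0 : q ≠ 0) (hq1 : 1 - q ≠ 0)
    (κ0 κ1 : Measure ℝ)
    (h0 : Measure.map L (μ[|X ⁻¹' {0}]) = κ0)
    (h1 : Measure.map L (μ[|X ⁻¹' {1}]) = κ1) :
    Measure.map (fun ω => (L ω, X ω)) μ
      = (1 - q) • Measure.map (fun y => (y, (0:ℝ))) κ0
        + q • Measure.map (fun y => (y, (1:ℝ))) κ1 := by
  have hs1 : MeasurableSet (X ⁻¹' {1}) := hX (measurableSet_singleton 1)
  have hcompl : X ⁻¹' {0} = (X ⁻¹' {1})ᶜ := by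
    ext ω
    rcases hbin ω with h | h <;> simp [h]
  have hm0 : μ (X ⁻¹' {0}) = 1 - q := by
    rw [hcompl, measure_compl hs1 (measure_ne_top μ _), hq, measure_univ]
  have hF : Measurable (fun ω => (L ω, X ω)) := hL.prodMk hX
  have hsplit : μ = μ.restrict (X ⁻¹' {1})ᶜ + μ.restrict (X ⁻¹' {1}) := by
    rw [add_comm, Measure.restrict_add_restrict_compl hs1]
  have key : ∀ (c : ℝ) (κ : Measure ℝ), μ (X ⁻¹' {c}) ≠ 0 →
      Measure.map L (μ[|X ⁻¹' {c}]) = κ →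
      Measure.map (fun ω => (L ω, X ω)) (μ.restrict (X ⁻¹' {c}))
        = μ (X ⁻¹' {c}) • Measure.map (fun y => (y, c)) κ := by
    intro c κ hc hκ
    rw [restrict_eq_smul_cond hc, Measure.map_smul]
    congr 1
    have hae' : ∀ᵐ ω ∂(μ.restrict (X ⁻¹' {c})), (L ω, X ω) = (L ω, c) := by
      filter_upwards [ae_restrict_mem (hX (measurableSet_singleton c))] with ω hω
      simp only [Set.mem_preimage, Set.mem_singleton_iff] at hω
      rw [hω]
    have hae : (fun ω => (L ω, X ω)) =ᵐ[μ[|X ⁻¹' {c}]] (fun ω => (L ω, c)) := by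
      rw [ProbabilityTheory.cond]
      exact Measure.ae_smul_measure hae' _
    rw [Measure.map_congr hae, ← hκ,
      Measure.map_map (show Measurable (fun y : ℝ => (y, c)) from
        measurable_id.prodMk measurable_const) hL]
    rfl
  calc Measure.map (fun ω => (L ω, X ω)) μ
      = Measure.map (fun ω => (L ω, X ω)) (μ.restrict (X ⁻¹' {1})ᶜ)
        + Measure.map (fun ω => (L ω, X ω)) (μ.restrict (X ⁻¹' {1})) := by
        conv_lhs => rw [hsplit]
        exact Measure.map_add _ _ hF
    _ = (1 - q) • Measure.map (fun y => (y, (0:ℝ))) κ0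
        + q • Measure.map (fun y => (y, (1:ℝ))) κ1 := by
        rw [← hcompl, key 0 κ0 (by rw [hm0]; exact hq1) h0,
          key 1 κ1 (by rw [hq]; exact hq0) h1, hm0, hq]

end glue
end helpers

/-- observational equivalence under standard IV-type moment restrictions.
Model A: `ε ≡ β₀` constant, `X` Bernoulli(`p`), `a | X=0 ~ N(0,1)`, `a | X=1 ~ N(0,1+σ²)`,
`log Y = a + ε X`. Model B: `(a, ε, X)` mutually independent, `a ~ N(0,1)`,
`ε ~ N(β₀, σ²)`, `X` Bernoulli(`p`), `log Y = a + ε X`. Then `(log Y, X)` has the same joint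
distribution in both models — conditionally on `X = 0` it is `N(0,1)` and conditionally on
`X = 1` it is `N(β₀, 1+σ²)` — yet the arithmetic mean semi-elasticities differ:
`θ_A(x) = β₀` for all `x` while `θ_B(x) = β₀ + σ² x`, so `θ_A(x) ≠ θ_B(x)` for all `x ≠ 0`. -/
theorem stmt11
    {ΩA : Type*} [MeasurableSpace ΩA] (μA : Measure ΩA) [IsProbabilityMeasure μA]
    {ΩB : Type*} [MeasurableSpace ΩB] (μB : Measure ΩB) [IsProbabilityMeasure μB]
    (β₀ σ p : ℝ) (hσ : 0 < σ) (hp : p ∈ Set.Ioo (0:ℝ) 1)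
    (aA XA : ΩA → ℝ) (haA : Measurable aA) (hXA : Measurable XA)
    (hXAbin : ∀ ω, XA ω = 0 ∨ XA ω = 1)
    (hXAp : μA (XA ⁻¹' {1}) = ENNReal.ofReal p)
    (hA0 : Measure.map aA (μA[|XA ⁻¹' {0}]) = gaussianReal 0 1)
    (hA1 : Measure.map aA (μA[|XA ⁻¹' {1}])
        = gaussianReal 0 (Real.toNNReal (1 + σ ^ 2)))
    (aB eB XB : ΩB → ℝ) (haB : Measurable aB) (heB : Measurable eB) (hXB : Measurable XB)
    (hXBbin : ∀ ω, XB ω = 0 ∨ XB ω = 1)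
    (hXBp : μB (XB ⁻¹' {1}) = ENNReal.ofReal p)
    (hindB : iIndepFun
        ![aB, eB, XB] μB)
    (hlawaB : Measure.map aB μB = gaussianReal 0 1)
    (hlaweB : Measure.map eB μB = gaussianReal β₀ (Real.toNNReal (σ ^ 2))) :
    -- same joint distribution of (log Y, X) in the two models
    (Measure.map (fun ω => (aA ω + β₀ * XA ω, XA ω)) μA
      = Measure.map (fun ω => (aB ω + eB ω * XB ω, XB ω)) μB)
    -- conditional laws: N(0,1) given X = 0 and N(β₀, 1+σ²) given X = 1, in both models
    ∧ Measure.map (fun ω => aA ω + β₀ * XA ω) (μA[|XA ⁻¹' {0}]) = gaussianReal 0 1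
    ∧ Measure.map (fun ω => aA ω + β₀ * XA ω) (μA[|XA ⁻¹' {1}])
        = gaussianReal β₀ (Real.toNNReal (1 + σ ^ 2))
    ∧ Measure.map (fun ω => aB ω + eB ω * XB ω) (μB[|XB ⁻¹' {0}]) = gaussianReal 0 1
    ∧ Measure.map (fun ω => aB ω + eB ω * XB ω) (μB[|XB ⁻¹' {1}])
        = gaussianReal β₀ (Real.toNNReal (1 + σ ^ 2))
    -- θ_A(x) = β₀ for all x
    ∧ (∀ x : ℝ,
        (∫ ω, β₀ * Real.exp (aA ω + β₀ * x) ∂μA) / (∫ ω, Real.exp (aA ω + β₀ * x) ∂μA)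
          = β₀)
    -- θ_B(x) = β₀ + σ²·x for all x
    ∧ (∀ x : ℝ,
        (∫ ω, eB ω * Real.exp (aB ω + eB ω * x) ∂μB)
            / (∫ ω, Real.exp (aB ω + eB ω * x) ∂μB)
          = β₀ + σ ^ 2 * x)
    -- θ_A(x) ≠ θ_B(x) for every x ≠ 0
    ∧ (∀ x : ℝ, x ≠ 0 →
        (∫ ω, β₀ * Real.exp (aA ω + β₀ * x) ∂μA) / (∫ ω, Real.exp (aA ω + β₀ * x) ∂μA)
          ≠ (∫ ω, eB ω * Real.exp (aB ω + eB ω * x) ∂μB)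
              / (∫ ω, Real.exp (aB ω + eB ω * x) ∂μB)) := by
  obtain ⟨hp0, hp1⟩ := hp
  have hσ2 : (0:ℝ) < σ ^ 2 := by positivity
  set v2 : ℝ≥0 := Real.toNNReal (σ ^ 2) with hv2
  have hv2ne : v2 ≠ 0 := by
    simp only [hv2, ne_eq, Real.toNNReal_eq_zero, not_le]
    exact hσ2
  have hv2coe : (v2 : ℝ) = σ ^ 2 := Real.coe_toNNReal _ hσ2.le
  set V : ℝ≥0 := Real.toNNReal (1 + σ ^ 2) with hV
  have hVcoe : (V : ℝ) = 1 + σ ^ 2 := Real.coe_toNNReal _ (by positivity)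
  have hVne : V ≠ 0 := by
    simp only [hV, ne_eq, Real.toNNReal_eq_zero, not_le]
    positivity
  have hVsum : (1 : ℝ≥0) + v2 = V := by
    apply NNReal.coe_injective
    rw [NNReal.coe_add, hv2coe, hVcoe, NNReal.coe_one]
  set q : ℝ≥0∞ := ENNReal.ofReal p with hqdef
  have hq0 : q ≠ 0 := by
    simp only [hqdef, ne_eq, ENNReal.ofReal_eq_zero, not_le]
    exact hp0
  have hq1 : 1 - q ≠ 0 := by
    rw [ne_eq, tsub_eq_zero_iff_le, not_le, hqdef]
    exact ENNReal.ofReal_lt_one.mpr hp1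
  -- events and their measures, model A
  have hsA1 : MeasurableSet (XA ⁻¹' {1}) := hXA (measurableSet_singleton 1)
  have hcomplA : XA ⁻¹' {0} = (XA ⁻¹' {1})ᶜ := by
    ext ω; rcases hXAbin ω with h | h <;> simp [h]
  have hmA0 : μA (XA ⁻¹' {0}) = 1 - q := by
    rw [hcomplA, measure_compl hsA1 (measure_ne_top μA _), hXAp, measure_univ]
  -- events, model B
  have hsB1 : MeasurableSet (XB ⁻¹' {1}) := hXB (measurableSet_singleton 1)
  have hcomplB : XB ⁻¹' {0} = (XB ⁻¹' {1})ᶜ := by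
    ext ω; rcases hXBbin ω with h | h <;> simp [h]
  have hmB0 : μB (XB ⁻¹' {0}) = 1 - q := by
    rw [hcomplB, measure_compl hsB1 (measure_ne_top μB _), hXBp, measure_univ]
  have hmB0ne : μB (XB ⁻¹' {0}) ≠ 0 := by rw [hmB0]; exact hq1
  have hmB1ne : μB (XB ⁻¹' {1}) ≠ 0 := by rw [hXBp]; exact hq0
  -- independence facts, model B
  have hmeasB : ∀ i, Measurable (![aB, eB, XB] i) := by
    intro i; fin_cases i <;> simpa using ‹_›
  have indae : IndepFun aB eB μB := by
    have := hindB.indepFun (show (0 : Fin 3) ≠ 1 by decide)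
    simpa using this
  have indaX : IndepFun aB XB μB := by
    have := hindB.indepFun (show (0 : Fin 3) ≠ 2 by decide)
    simpa using this
  have indPair : IndepFun (fun ω => (aB ω, eB ω)) XB μB := by
    have := hindB.indepFun_prodMk hmeasB 0 1 2 (by decide) (by decide)
    simpa using this
  have indSum : IndepFun (fun ω => aB ω + eB ω) XB μB := by
    have := indPair.comp (measurable_fst.add measurable_snd) measurable_id
    exact this
  -- law of the sum in model B
  have hpairB : Measure.map (fun ω => (aB ω, eB ω)) μB
      = (gaussianReal 0 1).prod (gaussianReal β₀ v2) := by
    rw [← hlawaB, ← hlaweB]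
    exact (indepFun_iff_map_prod_eq_prod_map_map haB.aemeasurable heB.aemeasurable).mp indae
  have hlawsum : Measure.map (fun ω => aB ω + eB ω) μB = gaussianReal β₀ V := by
    have h1 : Measure.map (fun ω => aB ω + eB ω) μB
        = Measure.map (fun p : ℝ × ℝ => p.1 + p.2)
            (Measure.map (fun ω => (aB ω, eB ω)) μB) := by
      rw [Measure.map_map (show Measurable (fun p : ℝ × ℝ => p.1 + p.2) by fun_prop) (haB.prodMk heB)]
      rfl
    rw [h1, hpairB, gaussianReal_conv 0 β₀ one_ne_zero hv2ne, zero_add, hVsum]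
  -- conditional laws, model A
  have C2 : Measure.map (fun ω => aA ω + β₀ * XA ω) (μA[|XA ⁻¹' {0}]) = gaussianReal 0 1 := by
    have hae : (fun ω => aA ω + β₀ * XA ω) =ᵐ[μA[|XA ⁻¹' {0}]] aA := by
      rw [ProbabilityTheory.cond]
      apply Measure.ae_smul_measure
      filter_upwards [ae_restrict_mem (hXA (measurableSet_singleton 0))] with ω hω
      simp only [Set.mem_preimage, Set.mem_singleton_iff] at hω
      rw [hω]; ring
    rw [Measure.map_congr hae, hA0]
  have C3 : Measure.map (fun ω => aA ω + β₀ * XA ω) (μA[|XA ⁻¹' {1}])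
      = gaussianReal β₀ V := by
    have hae : (fun ω => aA ω + β₀ * XA ω) =ᵐ[μA[|XA ⁻¹' {1}]] (fun ω => aA ω + β₀) := by
      rw [ProbabilityTheory.cond]
      apply Measure.ae_smul_measure
      filter_upwards [ae_restrict_mem hsA1] with ω hω
      simp only [Set.mem_preimage, Set.mem_singleton_iff] at hω
      rw [hω]; ring
    have hmm : Measure.map (fun ω => aA ω + β₀) (μA[|XA ⁻¹' {1}])
        = Measure.map (· + β₀) (Measure.map aA (μA[|XA ⁻¹' {1}])) := by
      rw [Measure.map_map (show Measurable (fun y : ℝ => y + β₀) from measurable_id.add_const β₀) haA]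
      rfl
    rw [Measure.map_congr hae, hmm, hA1, gaussianReal_map_add_const, zero_add]
  -- conditional laws, model B
  have C4 : Measure.map (fun ω => aB ω + eB ω * XB ω) (μB[|XB ⁻¹' {0}])
      = gaussianReal 0 1 := by
    have hae : (fun ω => aB ω + eB ω * XB ω) =ᵐ[μB[|XB ⁻¹' {0}]] aB := by
      rw [ProbabilityTheory.cond]
      apply Measure.ae_smul_measure
      filter_upwards [ae_restrict_mem (hXB (measurableSet_singleton 0))] with ω hω
      simp only [Set.mem_preimage, Set.mem_singleton_iff] at hω
      rw [hω]; ring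
    rw [Measure.map_congr hae,
      map_cond_of_indepFun haB hXB indaX (measurableSet_singleton 0) hmB0ne, hlawaB]
  have C5 : Measure.map (fun ω => aB ω + eB ω * XB ω) (μB[|XB ⁻¹' {1}])
      = gaussianReal β₀ V := by
    have hae : (fun ω => aB ω + eB ω * XB ω) =ᵐ[μB[|XB ⁻¹' {1}]]
        (fun ω => aB ω + eB ω) := by
      rw [ProbabilityTheory.cond]
      apply Measure.ae_smul_measure
      filter_upwards [ae_restrict_mem hsB1] with ω hω
      simp only [Set.mem_preimage, Set.mem_singleton_iff] at hω
      rw [hω]; ring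
    rw [Measure.map_congr hae,
      map_cond_of_indepFun (show Measurable (fun ω => aB ω + eB ω) by fun_prop) hXB indSum (measurableSet_singleton 1) hmB1ne,
      hlawsum]
  -- joint law
  have C1 : Measure.map (fun ω => (aA ω + β₀ * XA ω, XA ω)) μA
      = Measure.map (fun ω => (aB ω + eB ω * XB ω, XB ω)) μB := by
    have hjA := map_pair_eq (μ := μA) (fun ω => aA ω + β₀ * XA ω) XA
      (haA.add (measurable_const.mul hXA)) hXA hXAbin hXAp hq0 hq1
      (gaussianReal 0 1) (gaussianReal β₀ V) C2 C3
    have hjB := map_pair_eq (μ := μB) (fun ω => aB ω + eB ω * XB ω) XB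
      (haB.add (heB.mul hXB)) hXB hXBbin hXBp hq0 hq1
      (gaussianReal 0 1) (gaussianReal β₀ V) C4 C5
    rw [hjA, hjB]
  -- integrability of exp ∘ aA over μA
  have hexpint : Integrable (fun ω => Real.exp (aA ω)) μA := by
    have hint : ∀ (m : ℝ) (v : ℝ≥0), v ≠ 0 →
        Integrable (fun y => Real.exp y) (gaussianReal m v) := by
      intro m v hv
      exact (integrable_exp_gaussianReal m 1 hv).congr
        (Filter.Eventually.of_forall fun y => by simp)
    have key : ∀ (c : ℝ) (m : ℝ) (v : ℝ≥0), v ≠ 0 → μA (XA ⁻¹' {c}) ≠ 0 →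
        Measure.map aA (μA[|XA ⁻¹' {c}]) = gaussianReal m v →
        IntegrableOn (fun ω => Real.exp (aA ω)) (XA ⁻¹' {c}) μA := by
      intro c m v hv hne hlaw
      have h1 : Integrable (fun ω => Real.exp (aA ω)) (μA[|XA ⁻¹' {c}]) := by
        have h2 : Integrable (fun y => Real.exp y) (Measure.map aA (μA[|XA ⁻¹' {c}])) := by
          rw [hlaw]; exact hint m v hv
        exact (integrable_map_measure
          (Real.measurable_exp.aestronglyMeasurable) haA.aemeasurable).mp h2
      rw [IntegrableOn, restrict_eq_smul_cond hne]
      exact h1.smul_measure (measure_ne_top μA _)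
    have i1 : IntegrableOn (fun ω => Real.exp (aA ω)) (XA ⁻¹' {1}) μA :=
      key 1 0 V hVne (by rw [hXAp]; exact hq0) hA1
    have i0 : IntegrableOn (fun ω => Real.exp (aA ω)) (XA ⁻¹' {0}) μA :=
      key 0 0 1 one_ne_zero (by rw [hmA0]; exact hq1) hA0
    have := i1.union i0
    rw [hcomplA] at this
    rw [Set.union_compl_self] at this
    exact integrableOn_univ.mp this
  -- θ_A
  have C6 : ∀ x : ℝ,
      (∫ ω, β₀ * Real.exp (aA ω + β₀ * x) ∂μA) / (∫ ω, Real.exp (aA ω + β₀ * x) ∂μA)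
        = β₀ := by
    intro x
    have hIint : Integrable (fun ω => Real.exp (aA ω + β₀ * x)) μA := by
      refine (hexpint.mul_const (Real.exp (β₀ * x))).congr
        (Filter.Eventually.of_forall fun ω => ?_)
      simp [← Real.exp_add]
    have hIpos : 0 < ∫ ω, Real.exp (aA ω + β₀ * x) ∂μA := by
      rw [integral_pos_iff_support_of_nonneg (fun ω => (Real.exp_pos _).le) hIint]
      have : Function.support (fun ω => Real.exp (aA ω + β₀ * x)) = Set.univ :=
        Set.eq_univ_of_forall fun ω => (Real.exp_pos _).ne'
      rw [this, measure_univ]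
      norm_num
    rw [MeasureTheory.integral_const_mul, mul_div_assoc, div_self hIpos.ne', mul_one]
  -- θ_B
  have C7 : ∀ x : ℝ,
      (∫ ω, eB ω * Real.exp (aB ω + eB ω * x) ∂μB)
          / (∫ ω, Real.exp (aB ω + eB ω * x) ∂μB)
        = β₀ + σ ^ 2 * x := by
    intro x
    have hφm : Measurable fun y : ℝ => y * Real.exp (x * y) :=
      measurable_id.mul ((measurable_id.const_mul x).exp)
    have hEane : (∫ ω, Real.exp (aB ω) ∂μB) ≠ 0 := by
      have h1 := integral_map (μ := μB) haB.aemeasurable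
        (f := fun y => Real.exp (1 * y))
        ((measurable_const.mul measurable_id).exp.aestronglyMeasurable)
      rw [hlawaB, integral_exp_gaussianReal 0 1 one_ne_zero] at h1
      simp only [one_mul] at h1
      rw [← h1]
      exact Real.exp_ne_zero _
    have hEe1 : ∫ ω, eB ω * Real.exp (x * eB ω) ∂μB
        = (β₀ + v2 * x) * Real.exp (x * β₀ + v2 * x ^ 2 / 2) := by
      have h1 := integral_map (μ := μB) heB.aemeasurable
        (f := fun y => y * Real.exp (x * y)) hφm.aestronglyMeasurable
      rw [hlaweB, integral_id_mul_exp_gaussianReal β₀ x hv2ne] at h1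
      exact h1.symm
    have hEe0 : ∫ ω, Real.exp (x * eB ω) ∂μB = Real.exp (x * β₀ + v2 * x ^ 2 / 2) := by
      have h1 := integral_map (μ := μB) heB.aemeasurable
        (f := fun y => Real.exp (x * y))
        ((measurable_const.mul measurable_id).exp.aestronglyMeasurable)
      rw [hlaweB, integral_exp_gaussianReal β₀ x hv2ne] at h1
      exact h1.symm
    have indN : IndepFun (fun ω => Real.exp (aB ω))
        (fun ω => eB ω * Real.exp (x * eB ω)) μB :=
      indae.comp Real.measurable_exp hφm
    have indD : IndepFun (fun ω => Real.exp (aB ω))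
        (fun ω => Real.exp (x * eB ω)) μB :=
      indae.comp Real.measurable_exp ((measurable_id.const_mul x).exp)
    have hNum : ∫ ω, eB ω * Real.exp (aB ω + eB ω * x) ∂μB
        = (∫ ω, Real.exp (aB ω) ∂μB) * ∫ ω, eB ω * Real.exp (x * eB ω) ∂μB := by
      have hre : ∀ ω, eB ω * Real.exp (aB ω + eB ω * x)
          = Real.exp (aB ω) * (eB ω * Real.exp (x * eB ω)) := by
        intro ω
        rw [Real.exp_add, mul_comm (eB ω) x]
        ring
      simp only [hre]
      exact indN.integral_fun_mul_eq_mul_integral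
        ((Real.measurable_exp.comp haB).aestronglyMeasurable)
        ((hφm.comp heB).aestronglyMeasurable)
    have hDen : ∫ ω, Real.exp (aB ω + eB ω * x) ∂μB
        = (∫ ω, Real.exp (aB ω) ∂μB) * ∫ ω, Real.exp (x * eB ω) ∂μB := by
      have hre : ∀ ω, Real.exp (aB ω + eB ω * x)
          = Real.exp (aB ω) * Real.exp (x * eB ω) := by
        intro ω
        rw [← Real.exp_add, mul_comm (eB ω) x]
      simp only [hre]
      exact indD.integral_fun_mul_eq_mul_integral
        ((Real.measurable_exp.comp haB).aestronglyMeasurable)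
        ((((measurable_id.const_mul x).exp).comp heB).aestronglyMeasurable)
    rw [hNum, hDen, hEe1, hEe0, hv2coe,
      mul_div_mul_left _ _ hEane, mul_div_assoc, div_self (Real.exp_ne_zero _), mul_one]
  refine ⟨C1, C2, C3, C4, C5, C6, C7, fun x hx => ?_⟩
  rw [C6 x, C7 x]
  intro h
  have hσx : σ ^ 2 * x = 0 := by linarith
  rcases mul_eq_zero.mp hσx with h' | h'
  · nlinarith
  · exact hx h'
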